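/- arXiv:1111.0661 — 2 statements merged into one kernel-verified Lean document; each statement's English description precedes it below -/
import Mathlib

section
/- (von Neumann's inequality, matrix/dilation version) Let C be a bounded operator on a complex Hilbert space with ‖C‖ ≤ 1, and let p be a polynomial with complex coefficients. Then ‖p(C)‖ ≤ sup{|p(z)| : |z| ≤ 1}. -/
open Complex Finset
open scoped InnerProductSpace

namespace VonNeumannAux

lemma sum_pow_eq_ite {N : ℕ} {ζ : ℂ} (h1 : ζ ^ N = 1) :
    ∑ k ∈ range N, ζ ^ k = if ζ = 1 then (N : ℂ) else 0 := by
  split_ifs with h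
  · simp [h]
  · rw [geom_sum_eq h, h1, sub_self, zero_div]

variable {H : Type*} [NormedAddCommGroup H] [InnerProductSpace ℂ H] [CompleteSpace H]

lemma inner_map_map_self_star_eq (T : H →L[ℂ] H) (hsa : star T = T) (x y : H) :
    ⟪T x, y⟫_ℂ = ⟪x, T y⟫_ℂ := by
  conv_rhs => rw [← hsa, ContinuousLinearMap.star_eq_adjoint,
    ContinuousLinearMap.adjoint_inner_right]

/-- Cauchy–Schwarz for a positive (selfadjoint, nonneg) operator. -/
lemma cs_pos (T : H →L[ℂ] H) (hsa : star T = T) (hpos : ∀ x, 0 ≤ (⟪T x, x⟫_ℂ).re) (x y : H) :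
    ‖⟪T x, y⟫_ℂ‖ ≤ Real.sqrt (⟪T x, x⟫_ℂ).re * Real.sqrt (⟪T y, y⟫_ℂ).re := by
  by_cases hc0 : ⟪T x, y⟫_ℂ = 0
  · rw [hc0, norm_zero]
    positivity
  · set c : ℂ := ⟪T x, y⟫_ℂ with hc
    set u : ℂ := c / ‖c‖ with hu
    have hcn : (‖c‖ : ℂ) ≠ 0 := by
      simpa using norm_ne_zero_iff.mpr hc0
    have hnu : ‖u‖ = 1 := by
      rw [hu, norm_div]
      rw [Complex.norm_real, norm_norm]
      exact div_self (norm_ne_zero_iff.mpr hc0)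
    have huu : (starRingEnd ℂ) u * u = 1 := by
      rw [RCLike.conj_mul, hnu]
      norm_num
    have huc : (starRingEnd ℂ) u * c = (‖c‖ : ℂ) := by
      rw [hu, map_div₀, Complex.conj_ofReal, div_mul_eq_mul_div, RCLike.conj_mul, pow_two]
      exact mul_div_cancel_right₀ _ hcn
    set z : H := u • x with hz
    have hTzz : ⟪T z, z⟫_ℂ = ⟪T x, x⟫_ℂ := by
      rw [hz, map_smul, inner_smul_left, inner_smul_right, ← mul_assoc, huu, one_mul]
    have hTzy : ⟪T z, y⟫_ℂ = (‖c‖ : ℂ) := by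
      rw [hz, map_smul, inner_smul_left, ← hc, huc]
    have hTyz : ⟪T y, z⟫_ℂ = (‖c‖ : ℂ) := by
      rw [inner_map_map_self_star_eq T hsa, ← inner_conj_symm, hTzy, Complex.conj_ofReal]
    clear_value z
    have hq : ∀ t : ℝ, 0 ≤ (⟪T x, x⟫_ℂ).re * (t * t) + (2 * ‖c‖) * t + (⟪T y, y⟫_ℂ).re := by
      intro t
      have h0 := hpos ((t : ℂ) • z + y)
      have e1 : T ((t : ℂ) • z + y) = (t : ℂ) • T z + T y := by rw [map_add, map_smul]
      rw [e1] at h0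
      simp only [inner_add_left, inner_add_right, inner_smul_left, inner_smul_right,
        hTzz, hTzy, hTyz, Complex.conj_ofReal] at h0
      simp only [Complex.add_re, Complex.mul_re, Complex.mul_im, Complex.add_im,
        Complex.ofReal_re, Complex.ofReal_im, zero_mul, mul_zero, sub_zero, zero_add,
        add_zero] at h0
      ring_nf at h0 ⊢
      linarith
    have hd := discrim_le_zero hq
    rw [discrim] at hd
    have hab : ‖c‖ ^ 2 ≤ (⟪T x, x⟫_ℂ).re * (⟪T y, y⟫_ℂ).re := by nlinarith
    calc ‖c‖ ≤ Real.sqrt ((⟪T x, x⟫_ℂ).re * (⟪T y, y⟫_ℂ).re) := by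
          rw [Real.le_sqrt (norm_nonneg _) (by nlinarith [hpos x, hpos y])]
          exact hab
      _ = _ := Real.sqrt_mul (hpos x) _

/-- Operator norm bound from bounds on inner products. -/
lemma opnorm_le_of_inner (A : H →L[ℂ] H) {c : ℝ} (hc : 0 ≤ c)
    (h : ∀ x y : H, ‖⟪A x, y⟫_ℂ‖ ≤ c * (‖x‖ * ‖y‖)) : ‖A‖ ≤ c := by
  refine A.opNorm_le_bound hc fun x => ?_
  by_cases h0 : A x = 0
  · rw [h0, norm_zero]
    positivity
  · have h1 := h x (A x)
    rw [inner_self_eq_norm_sq_to_K (𝕜 := ℂ)] at h1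
    have h2 : ‖A x‖ ^ 2 ≤ c * (‖x‖ * ‖A x‖) := by
      calc ‖A x‖ ^ 2 = ‖((‖A x‖ : ℂ)) ^ 2‖ := by
            rw [norm_pow, Complex.norm_real, norm_norm]
        _ ≤ _ := h1
    have h3 : 0 < ‖A x‖ := norm_pos_iff.mpr h0
    nlinarith


set_option maxHeartbeats 2000000 in
lemma core (C : H →L[ℂ] H) (hC : ‖C‖ ≤ 1) (p : Polynomial ℂ) {M : ℝ}
    (hM : ∀ z : ℂ, ‖z‖ = 1 → ‖p.eval z‖ ≤ M) {r : ℝ} (hr0 : 0 ≤ r) (hr1 : r < 1)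
    {L : ℕ} (hL : p.natDegree < L) :
    ‖∑ j ∈ range (p.natDegree + 1), (p.coeff j * (r : ℂ) ^ j) • C ^ j‖
      ≤ M * (1 + r ^ L) + (∑ j ∈ range (p.natDegree + 1), ‖p.coeff j‖) * r ^ L := by
  have hM0 : 0 ≤ M := le_trans (norm_nonneg _) (hM 1 (by norm_num))
  set d := p.natDegree with hd
  set N := L + d + 1 with hN
  have hNpos : 0 < N := by omega
  set ω : ℂ := Complex.exp (2 * Real.pi * Complex.I / N) with hω
  have hprim : IsPrimitiveRoot ω N := Complex.isPrimitiveRoot_exp N (by omega)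
  have hωpow : ω ^ N = 1 := hprim.pow_eq_one
  have hωnorm : ‖ω‖ = 1 := norm_eq_one_of_pow_eq_one hωpow (by omega)
  have hωknorm : ∀ k : ℕ, ‖ω ^ k‖ = 1 := fun k => by rw [norm_pow, hωnorm, one_pow]
  -- discrete Fourier orthogonality
  have hdft : ∀ a b : ℕ, a < N → b < N →
      ∑ k ∈ range N, (ω ^ k) ^ a * (starRingEnd ℂ (ω ^ k)) ^ b
        = if a = b then (N : ℂ) else 0 := by
    intro a b ha hb
    have hω0 : ω ≠ 0 := fun h => by simp [h] at hωnorm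
    have hterm : ∀ k ∈ range N, (ω ^ k) ^ a * (starRingEnd ℂ (ω ^ k)) ^ b
        = (ω ^ a * (starRingEnd ℂ ω) ^ b) ^ k := by
      intro k _
      rw [pow_right_comm, map_pow, pow_right_comm ((starRingEnd ℂ) ω) k b, ← mul_pow]
    have hζN : (ω ^ a * (starRingEnd ℂ ω) ^ b) ^ N = 1 := by
      rw [mul_pow, pow_right_comm, hωpow, one_pow, one_mul,
        pow_right_comm, ← map_pow, hωpow, map_one, one_pow]
    have hiff : (ω ^ a * (starRingEnd ℂ ω) ^ b = 1) ↔ a = b := by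
      have hconj : (starRingEnd ℂ ω) = ω⁻¹ := (Complex.inv_eq_conj hωnorm).symm
      rw [hconj, inv_pow, mul_inv_eq_one₀ (pow_ne_zero _ hω0)]
      constructor
      · exact fun h => hprim.pow_inj ha hb h
      · rintro rfl; rfl
    rw [Finset.sum_congr rfl hterm, sum_pow_eq_ite hζN, if_congr hiff rfl rfl]
  -- norms of powers
  have hCn : ∀ n : ℕ, ‖C ^ n‖ ≤ 1 := by
    intro n
    induction n with
    | zero => simpa [ContinuousLinearMap.one_def] using ContinuousLinearMap.norm_id_le
    | succ n ih =>
        rw [pow_succ]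
        exact le_trans (norm_mul_le _ _) (by nlinarith [norm_nonneg (C ^ n)])
  have hCsn : ∀ n : ℕ, ‖(star C) ^ n‖ ≤ 1 := by
    intro n
    induction n with
    | zero => simpa [ContinuousLinearMap.one_def] using ContinuousLinearMap.norm_id_le
    | succ n ih =>
        rw [pow_succ]
        refine le_trans (norm_mul_le _ _) ?_
        rw [norm_star]
        nlinarith [norm_nonneg ((star C) ^ n)]
  -- the kernel operators
  set E : H →L[ℂ] H := 1 - ((r : ℂ) ^ 2) • (C * star C) with hE
  set D : ℕ → (H →L[ℂ] H) :=
    fun k => ∑ n ∈ range L, ((r : ℂ) * starRingEnd ℂ (ω ^ k)) ^ n • C ^ n with hD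
  set K : ℕ → (H →L[ℂ] H) := fun k => D k * E * star (D k) with hK
  have hEsa : star E = E := by
    simp [hE, star_sub, star_smul, star_mul, star_star, ← Complex.ofReal_pow,
      Complex.conj_ofReal, mul_assoc]
  have hKsa : ∀ k, star (K k) = K k := by
    intro k
    simp [hK, star_mul, star_star, hEsa, mul_assoc]
  have hKpos : ∀ k x, 0 ≤ (⟪K k x, x⟫_ℂ).re := by
    intro k x
    have h1 : ⟪K k x, x⟫_ℂ = ⟪E (star (D k) x), star (D k) x⟫_ℂ := by
      simp only [hK, ContinuousLinearMap.mul_apply]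
      rw [← ContinuousLinearMap.adjoint_inner_right (D k),
        ← ContinuousLinearMap.star_eq_adjoint]
    set w : H := star (D k) x with hw
    have h2 : ⟪E w, w⟫_ℂ = (‖w‖ : ℂ) ^ 2 - (r : ℂ) ^ 2 * (‖star C w‖ : ℂ) ^ 2 := by
      simp only [hE, ContinuousLinearMap.sub_apply, ContinuousLinearMap.smul_apply,
        ContinuousLinearMap.one_apply, ContinuousLinearMap.mul_apply, inner_sub_left,
        inner_smul_left]
      rw [← ContinuousLinearMap.adjoint_inner_right C, ← ContinuousLinearMap.star_eq_adjoint,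
        inner_self_eq_norm_sq_to_K, inner_self_eq_norm_sq_to_K]
      simp [Complex.conj_ofReal, map_pow]
    have h3 : ⟪E w, w⟫_ℂ = ((‖w‖ ^ 2 - r ^ 2 * ‖star C w‖ ^ 2 : ℝ) : ℂ) := by
      rw [h2]; push_cast; ring
    rw [h1, h3, Complex.ofReal_re]
    have hw1 : ‖star C w‖ ≤ ‖w‖ := by
      refine le_trans ((star C).le_opNorm w) ?_
      rw [norm_star]
      nlinarith [norm_nonneg w]
    have h4 : r ^ 2 ≤ 1 := by nlinarith
    have h5 : ‖star C w‖ ^ 2 ≤ ‖w‖ ^ 2 := by nlinarith [norm_nonneg (star C w)]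
    nlinarith [mul_le_mul_of_nonneg_left h5 (sq_nonneg r), sq_nonneg ‖w‖,
      mul_le_mul_of_nonneg_right h4 (sq_nonneg ‖w‖)]
  -- the key DFT/telescoping identity
  have hkey : ∀ j, j ≤ d →
      (N : ℂ)⁻¹ • ∑ k ∈ range N, ((ω ^ k) ^ j) • K k
        = ((r : ℂ) ^ j) • C ^ j - ((r : ℂ) ^ (2 * L - j)) • (C ^ L * (star C) ^ (L - j)) := by
    intro j hj
    have hjL : j < L := lt_of_le_of_lt hj hL
    have hDstar : ∀ k, star (D k)
        = ∑ n ∈ range L, (star ((r : ℂ) * starRingEnd ℂ (ω ^ k))) ^ n • (star C) ^ n := by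
      intro k
      simp only [hD, star_sum, star_smul, star_pow, RCLike.star_def]
    have step1 : ∀ k, ((ω ^ k) ^ j) • K k
        = ∑ n ∈ range L, ∑ m ∈ range L, ((ω ^ k) ^ (j + n) * (starRingEnd ℂ (ω ^ k)) ^ m) •
            (((r : ℂ) ^ m * (r : ℂ) ^ n) • (C ^ m * E * (star C) ^ n)) := by
      intro k
      simp only [hK]
      rw [hDstar k]
      simp only [hD]
      rw [Finset.sum_mul, Finset.sum_mul_sum, Finset.smul_sum]
      rw [Finset.sum_comm]
      refine Finset.sum_congr rfl fun n _ => ?_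
      rw [Finset.smul_sum]
      refine Finset.sum_congr rfl fun m _ => ?_
      simp only [smul_mul_assoc, mul_smul_comm, smul_smul, mul_assoc]
      congr 1
      simp only [RCLike.star_def, map_mul, map_pow, Complex.conj_conj, Complex.conj_ofReal,
        mul_pow, pow_add]
      ring
    have step2 : ∑ k ∈ range N, ((ω ^ k) ^ j) • K k
        = ∑ n ∈ range L, ∑ m ∈ range L, (if j + n = m then (N : ℂ) else 0) •
            (((r : ℂ) ^ m * (r : ℂ) ^ n) • (C ^ m * E * (star C) ^ n)) := by
      rw [Finset.sum_congr rfl fun k _ => step1 k, Finset.sum_comm]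
      refine Finset.sum_congr rfl fun n hn => ?_
      rw [Finset.sum_comm]
      refine Finset.sum_congr rfl fun m hm => ?_
      rw [← Finset.sum_smul, hdft (j + n) m
        (by have := Finset.mem_range.mp hn; omega) (by have := Finset.mem_range.mp hm; omega)]
    set f : ℕ → (H →L[ℂ] H) :=
      fun n => ((r : ℂ) ^ (j + 2 * n)) • (C ^ (j + n) * (star C) ^ n) with hf
    have htel : ∀ n, ((r : ℂ) ^ (j + n) * (r : ℂ) ^ n) • (C ^ (j + n) * E * (star C) ^ n)
        = f n - f (n + 1) := by
      intro n
      have e1 : C ^ (j + n) * E * (star C) ^ n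
          = C ^ (j + n) * (star C) ^ n - (r : ℂ) ^ 2 • (C ^ (j + n + 1) * (star C) ^ (n + 1)) := by
        rw [hE, mul_sub, mul_one, sub_mul, mul_smul_comm, smul_mul_assoc]
        congr 2
        rw [pow_succ, pow_succ']
        simp only [mul_assoc]
      rw [e1, smul_sub, smul_smul]
      congr 1
      · rw [← pow_add]
        have : j + n + n = j + 2 * n := by omega
        rw [this]
      · have e : j + n + n + 2 = j + 2 * (n + 1) := by omega
        have e' : j + (n + 1) = j + n + 1 := by omega
        simp only [hf, e']
        rw [← pow_add, ← pow_add, e]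
    have step3 : ∑ k ∈ range N, ((ω ^ k) ^ j) • K k
        = ∑ n ∈ range (L - j), (N : ℂ) • (f n - f (n + 1)) := by
      rw [step2]
      have e2 : ∀ n ∈ range L, (∑ m ∈ range L, (if j + n = m then (N : ℂ) else 0) •
          (((r : ℂ) ^ m * (r : ℂ) ^ n) • (C ^ m * E * (star C) ^ n)))
          = if j + n ∈ range L then
              (N : ℂ) • (((r : ℂ) ^ (j + n) * (r : ℂ) ^ n) • (C ^ (j + n) * E * (star C) ^ n))
            else 0 := by
        intro n _
        simp only [ite_smul, zero_smul]
        rw [Finset.sum_ite_eq]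
      rw [Finset.sum_congr rfl e2]
      rw [← Finset.sum_subset (Finset.range_subset_range.mpr (by omega : L - j ≤ L))
        (fun n hn hn2 => by
          rw [if_neg]
          simp only [Finset.mem_range] at hn hn2 ⊢
          omega)]
      refine Finset.sum_congr rfl fun n hn => ?_
      rw [if_pos (by simp only [Finset.mem_range] at hn ⊢; omega), htel n]
    rw [step3, ← Finset.smul_sum, smul_smul,
      inv_mul_cancel₀ (by exact_mod_cast hNpos.ne' : (N : ℂ) ≠ 0), one_smul,
      Finset.sum_range_sub' f (L - j)]
    have e3 : j + 2 * (L - j) = 2 * L - j := by omega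
    have e4 : j + (L - j) = L := by omega
    simp only [hf, e3, e4, add_zero, mul_zero, pow_zero, mul_one]
  -- decomposition
  set A : H →L[ℂ] H := (N : ℂ)⁻¹ • ∑ k ∈ range N, (p.eval (ω ^ k)) • K k with hA
  set B : H →L[ℂ] H :=
    ∑ j ∈ range (d + 1), (p.coeff j * (r : ℂ) ^ (2 * L - j)) • (C ^ L * (star C) ^ (L - j))
    with hB
  have hA' : A = (∑ j ∈ range (d + 1), (p.coeff j * (r : ℂ) ^ j) • C ^ j) - B := by
    have hev : ∀ k, (p.eval (ω ^ k)) • K k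
        = ∑ j ∈ range (d + 1), (p.coeff j) • (((ω ^ k) ^ j) • K k) := by
      intro k
      rw [Polynomial.eval_eq_sum_range, ← hd, Finset.sum_smul]
      simp only [mul_smul]
    have hA2 : A = ∑ j ∈ range (d + 1),
        (p.coeff j) • ((N : ℂ)⁻¹ • ∑ k ∈ range N, ((ω ^ k) ^ j) • K k) := by
      rw [hA, Finset.sum_congr rfl fun k _ => hev k, Finset.sum_comm, Finset.smul_sum]
      exact Finset.sum_congr rfl fun j _ => by rw [← Finset.smul_sum, smul_comm]
    rw [hA2, Finset.sum_congr rfl fun j hj =>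
      by rw [hkey j (by have := Finset.mem_range.mp hj; omega)]]
    simp only [smul_sub, smul_smul]
    rw [Finset.sum_sub_distrib, hB]
  have hPAB : ∑ j ∈ range (d + 1), (p.coeff j * (r : ℂ) ^ j) • C ^ j = A + B := by
    rw [hA', sub_add_cancel]
  have hrL : (0:ℝ) ≤ r ^ L := by positivity
  have hrn : ‖(r : ℂ)‖ = r := by
    rw [Complex.norm_real, Real.norm_eq_abs, _root_.abs_of_nonneg hr0]
  have hBnorm : ‖B‖ ≤ (∑ j ∈ range (d + 1), ‖p.coeff j‖) * r ^ L := by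
    rw [hB, Finset.sum_mul]
    refine le_trans (norm_sum_le _ _) (Finset.sum_le_sum fun j hj => ?_)
    have hjd : j ≤ d := by have := Finset.mem_range.mp hj; omega
    rw [norm_smul, norm_mul, norm_pow, hrn]
    have h1 : ‖C ^ L * (star C) ^ (L - j)‖ ≤ 1 := by
      refine le_trans (norm_mul_le _ _) ?_
      nlinarith [hCn L, hCsn (L - j), norm_nonneg (C ^ L), norm_nonneg ((star C) ^ (L - j))]
    have h2 : r ^ (2 * L - j) ≤ r ^ L :=
      pow_le_pow_of_le_one hr0 hr1.le (by omega)
    calc ‖p.coeff j‖ * r ^ (2 * L - j) * ‖C ^ L * (star C) ^ (L - j)‖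
        ≤ ‖p.coeff j‖ * r ^ L * 1 := by gcongr
      _ = ‖p.coeff j‖ * r ^ L := mul_one _
  have h1rL : (0:ℝ) ≤ 1 + r ^ L := by positivity
  have hG : ∀ x : H, (N : ℝ)⁻¹ * ∑ k ∈ range N, (⟪K k x, x⟫_ℂ).re
      ≤ (1 + r ^ L) * ‖x‖ ^ 2 := by
    intro x
    have h0 := hkey 0 (Nat.zero_le d)
    simp only [pow_zero, one_smul, Nat.sub_zero] at h0
    have e5 : (N : ℝ)⁻¹ * ∑ k ∈ range N, (⟪K k x, x⟫_ℂ).re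
        = (⟪((N : ℂ)⁻¹ • ∑ k ∈ range N, K k) x, x⟫_ℂ).re := by
      simp only [ContinuousLinearMap.smul_apply, ContinuousLinearMap.sum_apply,
        inner_smul_left, map_inv₀, map_natCast]
      rw [sum_inner, show ((N : ℂ))⁻¹ = (((N : ℝ)⁻¹ : ℝ) : ℂ) from by push_cast; rfl,
        Complex.re_ofReal_mul, Complex.re_sum]
    rw [e5, h0]
    set G : H →L[ℂ] H := 1 - ((r : ℂ) ^ (2 * L)) • (C ^ L * (star C) ^ L) with hG2
    have hGnorm : ‖G‖ ≤ 1 + r ^ L := by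
      refine le_trans (norm_sub_le _ _) ?_
      have e6 : ‖(1 : H →L[ℂ] H)‖ ≤ 1 := by
        simpa [ContinuousLinearMap.one_def] using ContinuousLinearMap.norm_id_le
      have e7 : ‖((r : ℂ) ^ (2 * L)) • (C ^ L * (star C) ^ L)‖ ≤ r ^ L := by
        rw [norm_smul, norm_pow, hrn]
        have h2 : r ^ (2 * L) ≤ r ^ L := pow_le_pow_of_le_one hr0 hr1.le (by omega)
        have h1 : ‖C ^ L * (star C) ^ L‖ ≤ 1 := by
          refine le_trans (norm_mul_le _ _) ?_
          nlinarith [hCn L, hCsn L, norm_nonneg (C ^ L), norm_nonneg ((star C) ^ L)]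
        nlinarith [pow_nonneg hr0 (2 * L), norm_nonneg (C ^ L * (star C) ^ L)]
      linarith
    calc (⟪G x, x⟫_ℂ).re ≤ ‖⟪G x, x⟫_ℂ‖ := Complex.re_le_norm _
      _ ≤ ‖G x‖ * ‖x‖ := norm_inner_le_norm _ _
      _ ≤ (‖G‖ * ‖x‖) * ‖x‖ := by
          have := G.le_opNorm x
          nlinarith [norm_nonneg x]
      _ ≤ (1 + r ^ L) * ‖x‖ ^ 2 := by nlinarith [norm_nonneg x, sq_nonneg ‖x‖]
  have hAnorm : ‖A‖ ≤ M * (1 + r ^ L) := by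
    refine opnorm_le_of_inner A (mul_nonneg hM0 h1rL) ?_
    intro x y
    have hAx : ⟪A x, y⟫_ℂ = (N : ℂ)⁻¹ *
        ∑ k ∈ range N, starRingEnd ℂ (p.eval (ω ^ k)) * ⟪K k x, y⟫_ℂ := by
      simp only [hA, ContinuousLinearMap.smul_apply, ContinuousLinearMap.sum_apply,
        inner_smul_left, map_inv₀, map_natCast, sum_inner]
    have hsq : ∀ x : H, Real.sqrt ((N : ℝ)⁻¹ * ∑ k ∈ range N, (⟪K k x, x⟫_ℂ).re)
        ≤ Real.sqrt (1 + r ^ L) * ‖x‖ := by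
      intro x
      refine le_trans (Real.sqrt_le_sqrt (hG x)) ?_
      rw [Real.sqrt_mul h1rL, Real.sqrt_sq (norm_nonneg x)]
    have hNr : (0:ℝ) ≤ (N : ℝ)⁻¹ := by positivity
    calc ‖⟪A x, y⟫_ℂ‖ = ‖(N : ℂ)⁻¹‖ * ‖∑ k ∈ range N,
            starRingEnd ℂ (p.eval (ω ^ k)) * ⟪K k x, y⟫_ℂ‖ := by rw [hAx, norm_mul]
      _ ≤ (N : ℝ)⁻¹ * ∑ k ∈ range N, M *
            (Real.sqrt (⟪K k x, x⟫_ℂ).re * Real.sqrt (⟪K k y, y⟫_ℂ).re) := by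
          rw [norm_inv, Complex.norm_natCast]
          refine mul_le_mul_of_nonneg_left (le_trans (norm_sum_le _ _)
            (Finset.sum_le_sum fun k _ => ?_)) hNr
          rw [norm_mul, RCLike.norm_conj]
          exact mul_le_mul (hM _ (hωknorm k)) (cs_pos (K k) (hKsa k) (hKpos k) x y)
            (norm_nonneg _) hM0
      _ = M * ((N : ℝ)⁻¹ * ∑ k ∈ range N,
            Real.sqrt (⟪K k x, x⟫_ℂ).re * Real.sqrt (⟪K k y, y⟫_ℂ).re) := by
          rw [← Finset.mul_sum]
          ring
      _ ≤ M * ((N : ℝ)⁻¹ * (Real.sqrt (∑ k ∈ range N, (⟪K k x, x⟫_ℂ).re)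
            * Real.sqrt (∑ k ∈ range N, (⟪K k y, y⟫_ℂ).re))) := by
          refine mul_le_mul_of_nonneg_left (mul_le_mul_of_nonneg_left ?_ hNr) hM0
          exact Real.sum_sqrt_mul_sqrt_le _ (fun k => hKpos k x) (fun k => hKpos k y)
      _ = M * (Real.sqrt ((N : ℝ)⁻¹ * ∑ k ∈ range N, (⟪K k x, x⟫_ℂ).re)
            * Real.sqrt ((N : ℝ)⁻¹ * ∑ k ∈ range N, (⟪K k y, y⟫_ℂ).re)) := by
          have hshuf : ∀ u v : ℝ, (N : ℝ)⁻¹ * (Real.sqrt u * Real.sqrt v)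
              = Real.sqrt ((N : ℝ)⁻¹ * u) * Real.sqrt ((N : ℝ)⁻¹ * v) := by
            intro u v
            rw [Real.sqrt_mul hNr, Real.sqrt_mul hNr,
              show Real.sqrt (N : ℝ)⁻¹ * Real.sqrt u * (Real.sqrt (N : ℝ)⁻¹ * Real.sqrt v)
                = (Real.sqrt (N : ℝ)⁻¹ * Real.sqrt (N : ℝ)⁻¹) * (Real.sqrt u * Real.sqrt v)
                from by ring, Real.mul_self_sqrt hNr]
          rw [hshuf]
      _ ≤ M * ((Real.sqrt (1 + r ^ L) * ‖x‖) * (Real.sqrt (1 + r ^ L) * ‖y‖)) := by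
          refine mul_le_mul_of_nonneg_left ?_ hM0
          exact mul_le_mul (hsq x) (hsq y) (Real.sqrt_nonneg _)
            (by positivity)
      _ = M * (1 + r ^ L) * (‖x‖ * ‖y‖) := by
          rw [show Real.sqrt (1 + r ^ L) * ‖x‖ * (Real.sqrt (1 + r ^ L) * ‖y‖)
            = (Real.sqrt (1 + r ^ L) * Real.sqrt (1 + r ^ L)) * (‖x‖ * ‖y‖) from by ring,
            Real.mul_self_sqrt h1rL]
          ring
  calc ‖∑ j ∈ range (d + 1), (p.coeff j * (r : ℂ) ^ j) • C ^ j‖ = ‖A + B‖ := by rw [hPAB]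
    _ ≤ ‖A‖ + ‖B‖ := norm_add_le _ _
    _ ≤ M * (1 + r ^ L) + (∑ j ∈ range (d + 1), ‖p.coeff j‖) * r ^ L := by
        exact add_le_add hAnorm hBnorm


lemma step_r {H : Type*} [NormedAddCommGroup H] [InnerProductSpace ℂ H] [CompleteSpace H]
    (C : H →L[ℂ] H) (hC : ‖C‖ ≤ 1) (p : Polynomial ℂ) {M : ℝ}
    (hM : ∀ z : ℂ, ‖z‖ = 1 → ‖p.eval z‖ ≤ M) {r : ℝ} (hr0 : 0 ≤ r) (hr1 : r < 1) :
    ‖∑ j ∈ range (p.natDegree + 1), (p.coeff j * (r : ℂ) ^ j) • C ^ j‖ ≤ M := by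
  set S := ∑ j ∈ range (p.natDegree + 1), ‖p.coeff j‖ with hS
  have htend : Filter.Tendsto (fun L : ℕ => M * (1 + r ^ L) + S * r ^ L)
      Filter.atTop (nhds M) := by
    have h1 := tendsto_pow_atTop_nhds_zero_of_lt_one hr0 hr1
    have h2 : Filter.Tendsto (fun L : ℕ => M * (1 + r ^ L) + S * r ^ L)
        Filter.atTop (nhds (M * (1 + 0) + S * 0)) :=
      (tendsto_const_nhds.mul (tendsto_const_nhds.add h1)).add (tendsto_const_nhds.mul h1)
    simpa using h2
  refine ge_of_tendsto htend ?_
  filter_upwards [Filter.eventually_ge_atTop (p.natDegree + 1)] with L hL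
  exact core C hC p hM hr0 hr1 (by omega)

end VonNeumannAux

open Finset VonNeumannAux in
/-- **von Neumann's inequality.** If `C` is a contraction on a complex
Hilbert space and `p` a polynomial with complex coefficients, then
`‖p(C)‖ ≤ sup {|p(z)| : |z| ≤ 1}`. -/
theorem von_neumann_inequality {H : Type*} [NormedAddCommGroup H]
    [InnerProductSpace ℂ H] [CompleteSpace H]
    (C : H →L[ℂ] H) (hC : ‖C‖ ≤ 1) (p : Polynomial ℂ) :
    ‖Polynomial.aeval C p‖ ≤
      sSup ((fun z => ‖Polynomial.eval z p‖) '' Metric.closedBall (0 : ℂ) 1) := by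
  set M := sSup ((fun z => ‖Polynomial.eval z p‖) '' Metric.closedBall (0 : ℂ) 1)
    with hMdef
  have hcont0 : Continuous fun z : ℂ => ‖p.eval z‖ :=
    continuous_norm.comp (Polynomial.continuous p)
  have hbdd : BddAbove ((fun z => ‖Polynomial.eval z p‖) ''
      Metric.closedBall (0 : ℂ) 1) :=
    ((isCompact_closedBall (0 : ℂ) 1).image hcont0).bddAbove
  have hM : ∀ z : ℂ, ‖z‖ = 1 → ‖p.eval z‖ ≤ M := by
    intro z hz
    have hzmem : z ∈ Metric.closedBall (0 : ℂ) 1 := by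
      rw [Metric.mem_closedBall, dist_zero_right, hz]
    exact le_csSup hbdd ⟨z, hzmem, rfl⟩
  have haev : (Polynomial.aeval C) p
      = ∑ j ∈ range (p.natDegree + 1), (p.coeff j * ((1 : ℝ) : ℂ) ^ j) • C ^ j := by
    rw [Polynomial.aeval_eq_sum_range]
    exact Finset.sum_congr rfl fun j _ => by norm_num
  have hcont2 : Continuous fun t : ℝ =>
      ‖∑ j ∈ range (p.natDegree + 1), (p.coeff j * (t : ℂ) ^ j) • C ^ j‖ := by
    refine Continuous.norm (continuous_finset_sum _ fun j _ => ?_)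
    exact (continuous_const.mul (Complex.continuous_ofReal.pow j)).smul continuous_const
  have hne : (nhdsWithin (1 : ℝ) (Set.Ico (0 : ℝ) 1)).NeBot := by
    refine mem_closure_iff_nhdsWithin_neBot.mp ?_
    rw [closure_Ico (by norm_num : (0 : ℝ) ≠ 1)]
    exact Set.right_mem_Icc.mpr (by norm_num)
  have htends : Filter.Tendsto (fun t : ℝ =>
      ‖∑ j ∈ range (p.natDegree + 1), (p.coeff j * (t : ℂ) ^ j) • C ^ j‖)
      (nhdsWithin 1 (Set.Ico (0 : ℝ) 1)) (nhds ‖(Polynomial.aeval C) p‖) := by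
    rw [haev]
    exact (hcont2.tendsto 1).mono_left nhdsWithin_le_nhds
  exact le_of_tendsto htends (eventually_nhdsWithin_of_forall
    fun t ht => step_r C hC p hM ht.1 ht.2)
end

section
/- Let δ be an m-tuple of polynomials in d variables, suppose φ : G_δ → ℂ is of the form φ(λ) = a + ⟪δ(λ)(1 − D δ(λ))⁻¹ γ, β⟫ where V = [[a, 1⊗β],[γ⊗1, D]] is an isometry on ℂ ⊕ M for a decomposed Hilbert space M = ⊕_{l=1}^m M_l, and δ(λ) acts on M by δ(λ)(⊕ x_l) = ⊕ δ_l(λ) x_l. Then |φ(λ)| ≤ 1 for every λ ∈ G_δ. -/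
open ContinuousLinearMap

set_option maxHeartbeats 1000000
set_option synthInstance.maxHeartbeats 400000

/-- Suppose `φ : G_δ → ℂ` has a realization
`φ(λ) = a + ⟨δ(λ)(1 − D δ(λ))⁻¹ γ, β⟩` where `V = [[a, 1⊗β],[γ⊗1, D]]` acts
isometrically on `ℂ ⊕ M` for a decomposed Hilbert space `M = ⊕_{l=1}^m M_l`, and `δ(λ)`
acts diagonally on `M` by `δ(λ)(⊕ x_l) = ⊕ δ_l(λ) x_l`.  Then `|φ(λ)| ≤ 1` for every
`λ ∈ G_δ`. -/
theorem realization_implies_contractive {d m : ℕ} (δ : Fin m → MvPolynomial (Fin d) ℂ)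
    (M : Fin m → Type) [∀ l, NormedAddCommGroup (M l)] [∀ l, InnerProductSpace ℂ (M l)]
    [∀ l, CompleteSpace (M l)]
    (a : ℂ) (β γ : PiLp 2 M) (D : PiLp 2 M →L[ℂ] PiLp 2 M)
    -- the diagonal action of `z ∈ ℂ^m` on `M = ⊕ M_l`:
    (Δ : (Fin m → ℂ) → (PiLp 2 M →L[ℂ] PiLp 2 M))
    (hΔ : ∀ (z : Fin m → ℂ) (x : PiLp 2 M) (l : Fin m),
      (WithLp.equiv 2 (∀ l, M l)) (Δ z x) l = z l • (WithLp.equiv 2 (∀ l, M l)) x l)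
    -- `V = [[a, 1⊗β],[γ⊗1, D]]` is an isometry on `ℂ ⊕ M`:
    (hV : ∀ (c : ℂ) (x : PiLp 2 M),
      ‖a * c + (inner ℂ β x : ℂ)‖ ^ 2 + ‖c • γ + D x‖ ^ 2 =
        ‖c‖ ^ 2 + ‖x‖ ^ 2)
    -- `φ` is given on `G_δ` by the transfer function of the realization:
    (φ : (Fin d → ℂ) → ℂ)
    (hφ : ∀ lam : Fin d → ℂ, (∀ l, ‖MvPolynomial.eval lam (δ l)‖ < 1) →
      φ lam = a + (inner ℂ β
        (Δ (fun l => MvPolynomial.eval lam (δ l))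
          (Ring.inverse (1 - D ∘L Δ (fun l => MvPolynomial.eval lam (δ l))) γ)) : ℂ)) :
    ∀ lam : Fin d → ℂ, (∀ l, ‖MvPolynomial.eval lam (δ l)‖ < 1) →
      ‖φ lam‖ ≤ 1 := by

  haveI : CompleteSpace (PiLp 2 M) := inferInstance
  intro lam hlam
  set z : Fin m → ℂ := fun l => MvPolynomial.eval lam (δ l) with hzdef
  obtain ⟨r, hr0, hr1, hrl⟩ : ∃ r : ℝ, 0 ≤ r ∧ r < 1 ∧ ∀ l, ‖z l‖ ≤ r := by
    rcases isEmpty_or_nonempty (Fin m) with h | h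
    · exact ⟨0, le_refl 0, one_pos, fun l => (h.false l).elim⟩
    · refine ⟨Finset.univ.sup' Finset.univ_nonempty (fun l => ‖z l‖), ?_, ?_, ?_⟩
      · obtain ⟨l⟩ := h
        exact le_trans (norm_nonneg (z l)) (Finset.le_sup' (fun l => ‖z l‖) (Finset.mem_univ l))
      · exact (Finset.sup'_lt_iff Finset.univ_nonempty).mpr (fun l _ => hlam l)
      · exact fun l => Finset.le_sup' (fun l => ‖z l‖) (Finset.mem_univ l)
  -- `Δ z` is an `r`-contraction
  have hΔnorm : ∀ x : PiLp 2 M, ‖Δ z x‖ ≤ r * ‖x‖ := by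
    intro x
    have h1 : ‖Δ z x‖ ^ 2 ≤ (r * ‖x‖) ^ 2 := by
      rw [PiLp.norm_sq_eq_of_L2, mul_pow, PiLp.norm_sq_eq_of_L2, Finset.mul_sum]
      refine Finset.sum_le_sum (fun l _ => ?_)
      have h2 : (Δ z x) l = z l • x l := hΔ z x l
      rw [h2, norm_smul, mul_pow]
      have h3 : ‖z l‖ ^ 2 ≤ r ^ 2 := by
        have := hrl l
        have h0 := norm_nonneg (z l)
        nlinarith
      nlinarith [sq_nonneg (‖x l‖)]
    exact (pow_le_pow_iff_left₀ (norm_nonneg _) (by positivity) two_ne_zero).mp h1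
  -- `D` is a contraction
  have hDnorm : ∀ x : PiLp 2 M, ‖D x‖ ≤ ‖x‖ := by
    intro x
    have h := hV 0 x
    simp only [mul_zero, zero_smul, zero_add, map_zero, norm_zero] at h
    have h1 : ‖D x‖ ^ 2 ≤ ‖x‖ ^ 2 := by nlinarith [sq_nonneg ‖(inner ℂ β x : ℂ)‖]
    exact (pow_le_pow_iff_left₀ (norm_nonneg _) (norm_nonneg _) two_ne_zero).mp h1
  set T : PiLp 2 M →L[ℂ] PiLp 2 M := D ∘L Δ z with hTdef
  have hTnorm : ‖T‖ < 1 := by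
    have : ‖T‖ ≤ r := by
      refine ContinuousLinearMap.opNorm_le_bound _ hr0 (fun x => ?_)
      calc ‖T x‖ = ‖D (Δ z x)‖ := rfl
        _ ≤ ‖Δ z x‖ := hDnorm _
        _ ≤ r * ‖x‖ := hΔnorm x
    linarith
  have hUnit : IsUnit (1 - T) := (Units.oneSub T hTnorm).isUnit
  set u : PiLp 2 M := Ring.inverse (1 - T) γ with hudef
  have hγ : u - T u = γ := by
    have h := Ring.mul_inverse_cancel (1 - T) hUnit
    have h2 := congrArg (fun (A : PiLp 2 M →L[ℂ] PiLp 2 M) => A γ) h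
    simpa [ContinuousLinearMap.mul_apply, ContinuousLinearMap.sub_apply] using h2
  have hφval : φ lam = a + (inner ℂ β (Δ z u) : ℂ) := hφ lam hlam
  have h := hV 1 (Δ z u)
  have hsum : γ + D (Δ z u) = u := by
    have : D (Δ z u) = T u := rfl
    rw [this, ← hγ]; abel
  rw [one_smul, hsum, mul_one, norm_one] at h
  have habs : ‖φ lam‖ ^ 2 + ‖u‖ ^ 2 = 1 ^ 2 + ‖Δ z u‖ ^ 2 := by
    rw [hφval]; exact h
  have hΔu : ‖Δ z u‖ ≤ ‖u‖ := le_trans (hΔnorm u) (by nlinarith [norm_nonneg u])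
  have h1 : ‖φ lam‖ ^ 2 ≤ 1 ^ 2 := by nlinarith [norm_nonneg u, norm_nonneg (Δ z u)]
  have := (pow_le_pow_iff_left₀ (norm_nonneg _) zero_le_one two_ne_zero).mp h1
  exact this
end
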